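/- Slater's summation formula: let r ≥ 1 be an integer and let (α;β) = (α₁,…,α_{r+1};β₁,…,β_r) ∈ 𝒰_r be such that no β_i + 1 is a non-positive integer. Then Σ_{k=0}^∞ (α₁)_k⋯(α_{r+1})_k/((β₁+1)_k⋯(β_r+1)_k · k!) = Γ(β₁+1)⋯Γ(β_r+1)/(Γ(α₁+1)⋯Γ(α_{r+1}+1)), where a quotient of Gamma values with a denominator argument equal to a non-positive integer is interpreted as zero. (The series converges, being r-balanced, since its parametric excess Σ_i(β_i+1) − Σ_i α_i equals r > 0.) -/

import Mathlib

noncomputable def poch (a : ℂ) (k : ℕ) : ℂ := Polynomial.eval a (ascPochhammer ℂ k)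

noncomputable def esym {n : ℕ} (v : Fin n → ℂ) (l : ℕ) : ℂ :=
  ∑ t ∈ Finset.powersetCard l (Finset.univ : Finset (Fin n)), ∏ i ∈ t, v i

def inU (r : ℕ) (α : Fin (r+1) → ℂ) (β : Fin r → ℂ) : Prop :=
  ∀ l : ℕ, 1 ≤ l → l ≤ r → esym α l = esym β l

open Filter Topology Finset

/-! ### Basic facts about `poch` -/

lemma poch_eq_prod (a : ℂ) (k : ℕ) : poch a k = ∏ j ∈ Finset.range k, (a + j) := by
  induction k with
  | zero => simp [poch]
  | succ n ih => rw [poch, ascPochhammer_succ_eval, ← poch, ih, Finset.prod_range_succ]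

lemma poch_succ (a : ℂ) (k : ℕ) : poch a (k+1) = poch a k * (a + k) := by
  rw [poch, ascPochhammer_succ_eval]; rfl

lemma poch_zero (a : ℂ) : poch a 0 = 1 := by simp [poch]

lemma poch_one (a : ℂ) : poch a 1 = a := by
  rw [show (1:ℕ) = 0 + 1 from rfl, poch_succ, poch_zero]; simp

lemma poch_ne_zero {a : ℂ} (h : ∀ m : ℕ, a ≠ -m) (k : ℕ) : poch a k ≠ 0 := by
  rw [poch_eq_prod]
  exact Finset.prod_ne_zero_iff.mpr fun j _ => fun hj => h j (by linear_combination hj)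

lemma poch_eq_zero {z : ℂ} {m k : ℕ} (hz : z = -(m:ℂ)) (hk : m < k) : poch z k = 0 := by
  rw [poch_eq_prod]
  exact Finset.prod_eq_zero (Finset.mem_range.mpr hk) (by rw [hz]; ring)

/-! ### Elementary symmetric polynomials and the key identity -/

lemma prod_add_esym (n : ℕ) (v : Fin n → ℂ) (x : ℂ) :
    ∏ i, (v i + x) = ∑ l ∈ Finset.range (n+1), esym v l * x^(n-l) := by
  rw [Finset.prod_add, Finset.powerset_card_disjiUnion]
  erw [Finset.sum_disjiUnion]
  rw [Finset.card_univ, Fintype.card_fin]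
  refine Finset.sum_congr rfl fun l hl => ?_
  rw [esym, Finset.sum_mul]
  refine Finset.sum_congr rfl fun t ht => ?_
  rw [Finset.mem_powersetCard] at ht
  rw [Finset.prod_const, Finset.card_sdiff_of_subset (Finset.subset_univ t), Finset.card_univ,
    Fintype.card_fin, ht.2]

lemma esym_zero (n : ℕ) (v : Fin n → ℂ) : esym v 0 = 1 := by simp [esym]

lemma esym_one {n : ℕ} (v : Fin n → ℂ) : esym v 1 = ∑ i, v i := by
  rw [esym, Finset.powersetCard_one, Finset.sum_map]
  simp

lemma esym_top (n : ℕ) (v : Fin n → ℂ) : esym v n = ∏ i, v i := by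
  rw [esym]
  have : Finset.powersetCard n (Finset.univ : Finset (Fin n)) = {Finset.univ} := by
    have := Finset.powersetCard_self (Finset.univ : Finset (Fin n))
    rwa [Finset.card_univ, Fintype.card_fin] at this
  rw [this]
  simp

lemma key_identity (r : ℕ) (α : Fin (r+1) → ℂ) (β : Fin r → ℂ)
    (hU : inU r α β) (x : ℂ) :
    ∏ i, (α i + x) = x * ∏ i, (β i + x) + ∏ i, α i := by
  rw [prod_add_esym, prod_add_esym, Finset.mul_sum]
  rw [Finset.sum_range_succ]
  have h1 : ∀ l ∈ Finset.range (r+1), esym α l * x ^ (r+1-l) = x * (esym β l * x ^ (r-l)) := by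
    intro l hl
    rw [Finset.mem_range] at hl
    have hlr : l ≤ r := Nat.lt_succ_iff.mp hl
    have : esym α l = esym β l := by
      rcases Nat.eq_zero_or_pos l with h0 | h0
      · subst h0; rw [esym_zero, esym_zero]
      · exact hU l h0 hlr
    rw [this]
    rw [show r + 1 - l = (r - l) + 1 by omega, pow_succ]
    ring
  rw [Finset.sum_congr rfl h1, esym_top]
  simp

/-! ### The terms and partial sums -/

noncomputable def Tterm (r : ℕ) (α : Fin (r+1) → ℂ) (β : Fin r → ℂ) (k : ℕ) : ℂ :=
  (∏ i, poch (α i) k) / ((∏ i, poch (β i + 1) k) * (k.factorial : ℂ))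

private lemma frac_id (a b bb P F n : ℂ) (hb : b ≠ 0) (hbb : bb ≠ 0) (hP : P ≠ 0)
    (hF : F ≠ 0) (hn1 : n + 1 ≠ 0) :
    a / (P * b * F) + a / ((b * bb) * (F * (n+1)))
      = a * ((n+1) * bb + P) / (P * (b * bb) * (F * (n+1))) := by
  field_simp

lemma B_ne_zero (r : ℕ) (β : Fin r → ℂ)
    (hβ : ∀ i : Fin r, ∀ m : ℕ, β i + 1 ≠ -(m : ℂ)) (N : ℕ) :
    ∏ i, poch (β i + 1) N ≠ 0 :=
  Finset.prod_ne_zero_iff.mpr fun i _ => poch_ne_zero (hβ i) N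

lemma partial_sum (r : ℕ) (α : Fin (r+1) → ℂ) (β : Fin r → ℂ)
    (hβ : ∀ i : Fin r, ∀ m : ℕ, β i + 1 ≠ -(m : ℂ))
    (hkey : ∀ x : ℂ, ∏ i, (α i + x) = x * ∏ i, (β i + x) + ∏ i, α i)
    (hP : ∏ i, α i ≠ 0) (N : ℕ) :
    ∑ k ∈ Finset.range (N+1), Tterm r α β k
      = (∏ i, poch (α i) (N+1)) /
        ((∏ i, α i) * (∏ i, poch (β i + 1) N) * (N.factorial : ℂ)) := by
  induction N with
  | zero =>
    norm_num [Tterm, poch_zero, poch_one, div_self hP]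
  | succ N ih =>
    rw [Finset.sum_range_succ, ih]
    have hbb : ∏ i, (β i + 1 + (N:ℂ)) ≠ 0 := by
      refine Finset.prod_ne_zero_iff.mpr fun i _ => fun h => hβ i N ?_
      linear_combination h
    have hb : ∏ i, poch (β i + 1) N ≠ 0 := B_ne_zero r β hβ N
    have hBs : ∏ i, poch (β i + 1) (N+1) = (∏ i, poch (β i + 1) N) * ∏ i, (β i + 1 + (N:ℂ)) := by
      rw [← Finset.prod_mul_distrib]
      exact Finset.prod_congr rfl fun i _ => poch_succ _ _
    have hAs : ∏ i, poch (α i) (N+1+1)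
        = (∏ i, poch (α i) (N+1)) * ∏ i, (α i + ((N:ℂ)+1)) := by
      rw [← Finset.prod_mul_distrib]
      refine Finset.prod_congr rfl fun i _ => ?_
      rw [poch_succ]
      push_cast
      ring
    have haa : ∏ i, (α i + ((N:ℂ)+1)) =
        ((N:ℂ)+1) * ∏ i, (β i + 1 + (N:ℂ)) + ∏ i, α i := by
      rw [hkey ((N:ℂ)+1)]
      congr 2
      exact Finset.prod_congr rfl fun i _ => by ring
    simp only [Tterm]
    rw [hAs, hBs, haa, Nat.factorial_succ]
    have hn1 : (N:ℂ) + 1 ≠ 0 := Nat.cast_add_one_ne_zero N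
    have hF : ((N.factorial : ℕ) : ℂ) ≠ 0 := Nat.cast_ne_zero.mpr N.factorial_ne_zero
    rw [show (((N+1) * N.factorial : ℕ) : ℂ) = (N.factorial : ℂ) * ((N:ℂ)+1) by push_cast; ring]
    exact frac_id _ _ _ _ _ _ hb hbb hP hF hn1

/-! ### GammaSeq facts -/

lemma cpow_sum' {x : ℂ} (hx : x ≠ 0) {ι : Type*} (s : Finset ι) (f : ι → ℂ) :
    x ^ (∑ i ∈ s, f i) = ∏ i ∈ s, x ^ f i := by
  classical
  induction s using Finset.induction_on with
  | empty => simp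
  | insert a s h ih => rw [Finset.sum_insert h, Finset.prod_insert h, Complex.cpow_add _ _ hx, ih]

lemma gammaSeq_ne_zero_and {z : ℂ} {N : ℕ} (hN : N ≠ 0) (hp : poch z (N+1) ≠ 0) :
    Complex.GammaSeq z N ≠ 0 ∧
      poch z (N+1) = (N:ℂ) ^ z * (N.factorial : ℂ) / Complex.GammaSeq z N := by
  have h1 : Complex.GammaSeq z N = (N:ℂ) ^ z * (N.factorial : ℂ) / poch z (N+1) := by
    rw [Complex.GammaSeq, poch_eq_prod]
  have hcp : (N:ℂ) ^ z ≠ 0 := by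
    intro h
    rcases (Complex.cpow_eq_zero_iff _ _).mp h with ⟨h2, -⟩
    exact hN (Nat.cast_eq_zero.mp h2)
  have hF : ((N.factorial : ℕ) : ℂ) ≠ 0 := Nat.cast_ne_zero.mpr N.factorial_ne_zero
  have hG : Complex.GammaSeq z N ≠ 0 := by
    rw [h1]; exact div_ne_zero (mul_ne_zero hcp hF) hp
  refine ⟨hG, ?_⟩
  rw [h1]; field_simp

lemma tendsto_aux (c : ℂ) : Tendsto (fun N : ℕ => (c + N) / (N:ℂ)) atTop (𝓝 1) := by
  have hinv : Tendsto (fun N : ℕ => ((N:ℂ))⁻¹) atTop (𝓝 0) := by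
    have h2 := (Complex.continuous_ofReal.tendsto (0:ℝ)).comp (tendsto_inv_atTop_nhds_zero_nat (𝕜 := ℝ))
    have h5 : Tendsto (fun n : ℕ => ((n:ℂ))⁻¹) atTop (𝓝 ((0:ℝ):ℂ)) :=
      h2.congr fun n => by simp [Function.comp]
    simpa using h5
  have h0 : Tendsto (fun N : ℕ => c * ((N:ℂ))⁻¹ + 1) atTop (𝓝 1) := by
    have := (hinv.const_mul c).add (tendsto_const_nhds (x := (1:ℂ)))
    simpa using this
  refine h0.congr' ?_
  filter_upwards [eventually_ge_atTop 1] with N hN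
  have hN0 : (N:ℂ) ≠ 0 := Nat.cast_ne_zero.mpr (by omega)
  field_simp

lemma tendsto_aux2 (c : ℂ) :
    Tendsto (fun N : ℕ => (N:ℂ) / (c + N)) atTop (𝓝 1) := by
  have := (tendsto_aux c).inv₀ one_ne_zero
  rw [inv_one] at this
  refine this.congr' ?_
  filter_upwards [eventually_ge_atTop 1] with N hN
  rw [inv_div]

private lemma frac_id2 (a F Fr Ga Gb bb P Nr : ℂ) (ha : a ≠ 0) (hF : F ≠ 0) (hFr : Fr ≠ 0)
    (hGa : Ga ≠ 0) (hGb : Gb ≠ 0) (hbb : bb ≠ 0) (hP : P ≠ 0) (hNr : Nr ≠ 0) :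
    (a * (Fr * F) / Ga) / (P * (a * Nr * Fr / (Gb * bb)) * F)
      = (bb / Nr) * (Gb / (P * Ga)) := by
  field_simp

private lemma frac_id3 (a F Fr Ga Gb bb aa Nr Np : ℂ) (ha : a ≠ 0) (hF : F ≠ 0) (hFr : Fr ≠ 0)
    (hGa : Ga ≠ 0) (hGb : Gb ≠ 0) (hbb : bb ≠ 0) (haa : aa ≠ 0) (hNr : Nr ≠ 0) :
    (a * (Fr * F) / (Ga * aa)) / ((a * Nr * Fr / (Gb * bb)) * F) * Np
      = (bb / Nr) * (Gb / Ga) * (Np / aa) := by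
  field_simp

/-! ### Master computation for the non-degenerate case -/

lemma master_partial (r : ℕ) (α : Fin (r+1) → ℂ) (β : Fin r → ℂ)
    (hβ : ∀ i : Fin r, ∀ m : ℕ, β i + 1 ≠ -(m : ℂ))
    (hα : ∀ i : Fin (r+1), ∀ m : ℕ, α i ≠ -(m : ℂ))
    (hsum : ∑ i, α i = ∑ i, β i)
    (hkey : ∀ x : ℂ, ∏ i, (α i + x) = x * ∏ i, (β i + x) + ∏ i, α i)
    (N : ℕ) (hN : 1 ≤ N) :
    (∑ k ∈ Finset.range (N+1), Tterm r α β k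
      = ((∏ i, (β i + 1 + (N:ℂ))) / (N:ℂ)^r) *
        ((∏ i, Complex.GammaSeq (β i + 1) N) /
          ((∏ i, α i) * ∏ i, Complex.GammaSeq (α i) N)))
    ∧ (Tterm r α β N * (N:ℂ)^(r+1)
      = ((∏ i, (β i + 1 + (N:ℂ))) / (N:ℂ)^r) *
        ((∏ i, Complex.GammaSeq (β i + 1) N) / (∏ i, Complex.GammaSeq (α i) N)) *
        ((N:ℂ)^(r+1) / ∏ i, (α i + (N:ℂ)))) := by
  have hN0 : N ≠ 0 := by omega
  have hNc : (N:ℂ) ≠ 0 := Nat.cast_ne_zero.mpr hN0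
  have hP : ∏ i, α i ≠ 0 :=
    Finset.prod_ne_zero_iff.mpr fun i _ => by simpa using hα i 0
  have hF : ((N.factorial : ℕ) : ℂ) ≠ 0 := Nat.cast_ne_zero.mpr N.factorial_ne_zero
  have hFr : ((N.factorial : ℕ) : ℂ)^r ≠ 0 := pow_ne_zero _ hF
  have hGa := fun i : Fin (r+1) => gammaSeq_ne_zero_and hN0 (poch_ne_zero (hα i) (N+1))
  have hGb := fun i : Fin r => gammaSeq_ne_zero_and hN0 (poch_ne_zero (hβ i) (N+1))
  have hGa_ne : ∏ i, Complex.GammaSeq (α i) N ≠ 0 :=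
    Finset.prod_ne_zero_iff.mpr fun i _ => (hGa i).1
  have hGb_ne : ∏ i, Complex.GammaSeq (β i + 1) N ≠ 0 :=
    Finset.prod_ne_zero_iff.mpr fun i _ => (hGb i).1
  have hbb_ne : ∏ i, (β i + 1 + (N:ℂ)) ≠ 0 := by
    refine Finset.prod_ne_zero_iff.mpr fun i _ => fun h => hβ i N ?_
    linear_combination h
  have haa_ne : ∏ i, (α i + (N:ℂ)) ≠ 0 := by
    refine Finset.prod_ne_zero_iff.mpr fun i _ => fun h => hα i N ?_
    linear_combination h
  have haP_ne : ∏ i, (N:ℂ) ^ (α i) ≠ 0 := by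
    refine Finset.prod_ne_zero_iff.mpr fun i _ => fun h => ?_
    exact hN0 (Nat.cast_eq_zero.mp ((Complex.cpow_eq_zero_iff _ _).mp h).1)
  have hNr : (N:ℂ)^r ≠ 0 := pow_ne_zero _ hNc
  have hA : ∏ i, poch (α i) (N+1)
      = (∏ i, (N:ℂ) ^ (α i)) * (((N.factorial:ℂ))^r * (N.factorial:ℂ))
        / ∏ i, Complex.GammaSeq (α i) N := by
    rw [Finset.prod_congr rfl (fun i _ => (hGa i).2), Finset.prod_div_distrib,
      Finset.prod_mul_distrib, Finset.prod_const, Finset.card_univ, Fintype.card_fin, pow_succ]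
  have hcp : ∏ i, (N:ℂ) ^ (β i + 1) = (∏ i, (N:ℂ) ^ (α i)) * (N:ℂ)^r := by
    calc ∏ i, (N:ℂ) ^ (β i + 1) = (N:ℂ) ^ (∑ i, (β i + 1)) := (cpow_sum' hNc _ _).symm
      _ = (N:ℂ) ^ (∑ i, β i + (r:ℂ)) := by
          congr 1
          rw [Finset.sum_add_distrib, Finset.sum_const, Finset.card_univ, Fintype.card_fin]
          simp
      _ = (N:ℂ) ^ (∑ i, α i + ((r:ℕ):ℂ)) := by rw [hsum]
      _ = (N:ℂ) ^ (∑ i, α i) * (N:ℂ) ^ ((r:ℕ):ℂ) := Complex.cpow_add _ _ hNc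
      _ = (∏ i, (N:ℂ) ^ (α i)) * (N:ℂ)^r := by rw [cpow_sum' hNc, Complex.cpow_natCast]
  have hBp : ∏ i, poch (β i + 1) (N+1)
      = (∏ i, (N:ℂ) ^ (α i)) * (N:ℂ)^r * ((N.factorial:ℂ))^r
        / ∏ i, Complex.GammaSeq (β i + 1) N := by
    rw [Finset.prod_congr rfl (fun i _ => (hGb i).2), Finset.prod_div_distrib,
      Finset.prod_mul_distrib, Finset.prod_const, Finset.card_univ, Fintype.card_fin, hcp]
  have hB : ∏ i, poch (β i + 1) N
      = (∏ i, (N:ℂ) ^ (α i)) * (N:ℂ)^r * ((N.factorial:ℂ))^r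
        / ((∏ i, Complex.GammaSeq (β i + 1) N) * ∏ i, (β i + 1 + (N:ℂ))) := by
    have h1 : (∏ i, poch (β i + 1) N) * ∏ i, (β i + 1 + (N:ℂ))
        = ∏ i, poch (β i + 1) (N+1) := by
      rw [← Finset.prod_mul_distrib]
      exact Finset.prod_congr rfl fun i _ => (poch_succ _ _).symm
    rw [hBp] at h1
    rw [eq_div_iff (mul_ne_zero hGb_ne hbb_ne)]
    calc (∏ i, poch (β i + 1) N) * ((∏ i, Complex.GammaSeq (β i + 1) N) * ∏ i, (β i + 1 + (N:ℂ)))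
        = ((∏ i, poch (β i + 1) N) * ∏ i, (β i + 1 + (N:ℂ))) * ∏ i, Complex.GammaSeq (β i + 1) N := by
          ring
      _ = ((∏ i, (N:ℂ) ^ (α i)) * (N:ℂ)^r * ((N.factorial:ℂ))^r
            / ∏ i, Complex.GammaSeq (β i + 1) N) * ∏ i, Complex.GammaSeq (β i + 1) N := by
          rw [h1]
      _ = (∏ i, (N:ℂ) ^ (α i)) * (N:ℂ)^r * ((N.factorial:ℂ))^r := div_mul_cancel₀ _ hGb_ne
  have hA2 : ∏ i, poch (α i) N
      = (∏ i, (N:ℂ) ^ (α i)) * (((N.factorial:ℂ))^r * (N.factorial:ℂ))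
        / ((∏ i, Complex.GammaSeq (α i) N) * ∏ i, (α i + (N:ℂ))) := by
    have h1 : (∏ i, poch (α i) N) * ∏ i, (α i + (N:ℂ)) = ∏ i, poch (α i) (N+1) := by
      rw [← Finset.prod_mul_distrib]
      exact Finset.prod_congr rfl fun i _ => (poch_succ _ _).symm
    rw [hA] at h1
    rw [eq_div_iff (mul_ne_zero hGa_ne haa_ne)]
    calc (∏ i, poch (α i) N) * ((∏ i, Complex.GammaSeq (α i) N) * ∏ i, (α i + (N:ℂ)))
        = ((∏ i, poch (α i) N) * ∏ i, (α i + (N:ℂ))) * ∏ i, Complex.GammaSeq (α i) N := by ring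
      _ = ((∏ i, (N:ℂ) ^ (α i)) * (((N.factorial:ℂ))^r * (N.factorial:ℂ))
            / ∏ i, Complex.GammaSeq (α i) N) * ∏ i, Complex.GammaSeq (α i) N := by rw [h1]
      _ = (∏ i, (N:ℂ) ^ (α i)) * (((N.factorial:ℂ))^r * (N.factorial:ℂ)) := div_mul_cancel₀ _ hGa_ne
  constructor
  · rw [partial_sum r α β hβ hkey hP N, hA, hB]
    exact frac_id2 _ _ _ _ _ _ _ _ haP_ne hF hFr hGa_ne hGb_ne hbb_ne hP hNr
  · simp only [Tterm]
    rw [hA2, hB]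
    exact frac_id3 _ _ _ _ _ _ _ _ _ haP_ne hF hFr hGa_ne hGb_ne hbb_ne haa_ne hNr

/-- Slater's summation formula (Theorem thm:slater). -/
theorem slater_summation
    (r : ℕ) (hr : 1 ≤ r) (α : Fin (r+1) → ℂ) (β : Fin r → ℂ)
    (hU : inU r α β)
    (hβ : ∀ i : Fin r, ∀ m : ℕ, β i + 1 ≠ -(m : ℂ)) :
    ∑' k : ℕ, (∏ i, poch (α i) k) / ((∏ i, poch (β i + 1) k) * (k.factorial : ℂ))
      = (∏ i, Complex.Gamma (β i + 1)) / (∏ i, Complex.Gamma (α i + 1)) := by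
  classical
  have hkey := key_identity r α β hU
  have hTd : (fun k : ℕ => (∏ i, poch (α i) k) / ((∏ i, poch (β i + 1) k) * (k.factorial : ℂ)))
      = Tterm r α β := rfl
  rw [show (∑' k : ℕ, (∏ i, poch (α i) k) / ((∏ i, poch (β i + 1) k) * (k.factorial : ℂ)))
      = ∑' k : ℕ, Tterm r α β k from rfl]
  by_cases hP : ∏ i, α i = 0
  · -- some α i is zero : the series is 1 and the Gamma quotient is 1
    have hpq : ∏ i, (Polynomial.X + Polynomial.C (α i))
        = Polynomial.X * ∏ i, (Polynomial.X + Polynomial.C (β i)) := by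
      apply Polynomial.funext
      intro x
      rw [Polynomial.eval_prod, Polynomial.eval_mul, Polynomial.eval_prod, Polynomial.eval_X]
      simp only [Polynomial.eval_add, Polynomial.eval_X, Polynomial.eval_C]
      have h := hkey x
      rw [hP, add_zero] at h
      rw [show ∏ i, (x + α i) = ∏ i, (α i + x) from Finset.prod_congr rfl fun i _ => add_comm _ _,
        h]
      exact congrArg _ (Finset.prod_congr rfl fun i _ => add_comm _ _)
    have e1 : ∀ (n : ℕ) (v : Fin n → ℂ), ∏ i, (Polynomial.X + Polynomial.C (v i))
        = (Multiset.map (fun a => Polynomial.X - Polynomial.C a)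
            ((Multiset.map v Finset.univ.val).map Neg.neg)).prod := by
      intro n v
      rw [Finset.prod_eq_multiset_prod, Multiset.map_map, Multiset.map_map]
      congr 1
      apply Multiset.map_congr rfl
      intro i _
      simp [Function.comp, sub_neg_eq_add]
    have hM : (Multiset.map α Finset.univ.val) = 0 ::ₘ (Multiset.map β Finset.univ.val) := by
      have e2 := congrArg Polynomial.roots hpq
      rw [e1 _ α, e1 _ β] at e2
      have e3 : Polynomial.X * (Multiset.map (fun a => Polynomial.X - Polynomial.C a)
            ((Multiset.map β Finset.univ.val).map Neg.neg)).prod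
          = (Multiset.map (fun a => Polynomial.X - Polynomial.C a)
            (0 ::ₘ (Multiset.map β Finset.univ.val).map Neg.neg)).prod := by
        rw [Multiset.map_cons, Multiset.prod_cons]
        simp
      rw [e3, Polynomial.roots_multiset_prod_X_sub_C, Polynomial.roots_multiset_prod_X_sub_C]
        at e2
      have e4 : (0 ::ₘ (Multiset.map β Finset.univ.val).map Neg.neg)
          = ((0 ::ₘ Multiset.map β Finset.univ.val).map Neg.neg) := by
        rw [Multiset.map_cons, neg_zero]
      rw [e4] at e2
      exact Multiset.map_injective neg_injective e2
    obtain ⟨j, -, hj⟩ := Finset.prod_eq_zero_iff.mp hP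
    have hT1 : ∀ k : ℕ, k ≠ 0 → Tterm r α β k = 0 := by
      intro k hk
      simp only [Tterm]
      rw [Finset.prod_eq_zero (Finset.mem_univ j)
        (poch_eq_zero (m := 0) (by simpa using hj) (by omega)), zero_div]
    rw [tsum_eq_single 0 hT1]
    have hΓ : ∏ i, Complex.Gamma (α i + 1) = ∏ i, Complex.Gamma (β i + 1) := by
      have g1 : ∀ (n:ℕ) (v : Fin n → ℂ), ∏ i, Complex.Gamma (v i + 1)
          = ((Multiset.map v Finset.univ.val).map (fun a => Complex.Gamma (a+1))).prod := by
        intro n v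
        rw [Finset.prod_eq_multiset_prod, Multiset.map_map]
        rfl
      rw [g1 _ α, g1 _ β, hM, Multiset.map_cons, Multiset.prod_cons]
      norm_num [Complex.Gamma_one]
    rw [hΓ, div_self (Finset.prod_ne_zero_iff.mpr fun i _ => Complex.Gamma_ne_zero (hβ i))]
    simp [Tterm, poch_zero]
  · by_cases hα : ∀ i : Fin (r+1), ∀ m : ℕ, α i ≠ -(m : ℂ)
    · -- non-degenerate case
      have hsum1 : ∑ i, α i = ∑ i, β i := by
        have h := hU 1 le_rfl hr
        rwa [esym_one, esym_one] at h
      have hmaster := fun (N : ℕ) (hN : 1 ≤ N) =>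
        master_partial r α β hβ hα hsum1 hkey N hN
      have hα0 : ∀ i, α i ≠ 0 := fun i => by simpa using hα i 0
      have hΓa_ne : ∏ i, Complex.Gamma (α i) ≠ 0 :=
        Finset.prod_ne_zero_iff.mpr fun i _ => Complex.Gamma_ne_zero (hα i)
      have hPG : (∏ i, α i) * ∏ i, Complex.Gamma (α i) = ∏ i, Complex.Gamma (α i + 1) := by
        rw [← Finset.prod_mul_distrib]
        exact Finset.prod_congr rfl fun i _ => (Complex.Gamma_add_one _ (hα0 i)).symm
      have l1 : Tendsto (fun N : ℕ => (∏ i, (β i + 1 + (N:ℂ))) / (N:ℂ)^r) atTop (𝓝 1) := by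
        have hform : ∀ N : ℕ, (∏ i, (β i + 1 + (N:ℂ))) / (N:ℂ)^r
            = ∏ i, ((β i + 1 + (N:ℂ)) / (N:ℂ)) := by
          intro N
          rw [Finset.prod_div_distrib, Finset.prod_const, Finset.card_univ, Fintype.card_fin]
        simp only [hform]
        have := tendsto_finset_prod (Finset.univ : Finset (Fin r))
          (fun i _ => tendsto_aux (β i + 1))
        simpa using this
      have l2 : Tendsto (fun N : ℕ => ∏ i, Complex.GammaSeq (β i + 1) N) atTop
          (𝓝 (∏ i, Complex.Gamma (β i + 1))) :=
        tendsto_finset_prod _ fun i _ => Complex.GammaSeq_tendsto_Gamma _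
      have l3 : Tendsto (fun N : ℕ => ∏ i, Complex.GammaSeq (α i) N) atTop
          (𝓝 (∏ i, Complex.Gamma (α i))) :=
        tendsto_finset_prod _ fun i _ => Complex.GammaSeq_tendsto_Gamma _
      have l4 : Tendsto (fun N : ℕ => (N:ℂ)^(r+1) / ∏ i, (α i + (N:ℂ))) atTop (𝓝 1) := by
        have hform : ∀ N : ℕ, (N:ℂ)^(r+1) / (∏ i, (α i + (N:ℂ)))
            = ∏ i : Fin (r+1), ((N:ℂ) / (α i + (N:ℂ))) := by
          intro N
          rw [Finset.prod_div_distrib, Finset.prod_const, Finset.card_univ, Fintype.card_fin]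
        simp only [hform]
        have := tendsto_finset_prod (Finset.univ : Finset (Fin (r+1)))
          (fun i _ => tendsto_aux2 (α i))
        simpa using this
      have hlimS : Tendsto (fun N : ℕ => ∑ k ∈ Finset.range (N+1), Tterm r α β k) atTop
          (𝓝 ((∏ i, Complex.Gamma (β i + 1)) / (∏ i, Complex.Gamma (α i + 1)))) := by
        have hF0 := l1.mul (l2.div (tendsto_const_nhds.mul l3) (mul_ne_zero hP hΓa_ne))
        rw [one_mul, hPG] at hF0
        refine hF0.congr' ?_
        filter_upwards [eventually_ge_atTop 1] with N hN
        exact ((hmaster N hN).1).symm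
      have hT : Tendsto (fun N : ℕ => Tterm r α β N * (N:ℂ)^(r+1)) atTop
          (𝓝 (1 * ((∏ i, Complex.Gamma (β i + 1)) / (∏ i, Complex.Gamma (α i))) * 1)) := by
        have := (l1.mul (l2.div l3 hΓa_ne)).mul l4
        refine this.congr' ?_
        filter_upwards [eventually_ge_atTop 1] with N hN
        exact ((hmaster N hN).2).symm
      have hsummable : Summable (Tterm r α β) := by
        apply summable_of_isBigO_nat' (g := fun n : ℕ => 1 / (n:ℝ)^2)
          ((Real.summable_one_div_nat_pow (p := 2)).mpr (by norm_num))
        rw [Asymptotics.isBigO_iff]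
        refine ⟨‖1 * ((∏ i, Complex.Gamma (β i + 1)) / (∏ i, Complex.Gamma (α i))) * 1‖ + 1, ?_⟩
        have hev := hT.norm.eventually_le_const
          (lt_add_one ‖1 * ((∏ i, Complex.Gamma (β i + 1)) / (∏ i, Complex.Gamma (α i))) * 1‖)
        filter_upwards [hev, eventually_ge_atTop 1] with N h1 h2
        set C := ‖1 * ((∏ i, Complex.Gamma (β i + 1)) / (∏ i, Complex.Gamma (α i))) * 1‖ + 1
          with hCdef
        have hN1 : (1:ℝ) ≤ (N:ℝ) := by exact_mod_cast h2
        have hnorm : ‖Tterm r α β N * (N:ℂ)^(r+1)‖ = ‖Tterm r α β N‖ * (N:ℝ)^(r+1) := by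
          rw [norm_mul, norm_pow, Complex.norm_natCast]
        rw [hnorm] at h1
        have hp2 : (N:ℝ)^2 ≤ (N:ℝ)^(r+1) := pow_le_pow_right₀ hN1 (by omega)
        have h3 : ‖Tterm r α β N‖ * (N:ℝ)^2 ≤ C :=
          le_trans (mul_le_mul_of_nonneg_left hp2 (norm_nonneg _)) h1
        have h4 : ‖Tterm r α β N‖ ≤ C * (1/(N:ℝ)^2) := by
          rw [mul_one_div, le_div_iff₀ (by positivity)]
          exact h3
        calc ‖Tterm r α β N‖ ≤ C * (1/(N:ℝ)^2) := h4
          _ = C * ‖1/(N:ℝ)^2‖ := by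
              rw [Real.norm_eq_abs, abs_of_nonneg (by positivity)]
      have h5 := hsummable.hasSum.tendsto_sum_nat
      have h6 : Tendsto (fun N : ℕ => ∑ k ∈ Finset.range (N+1), Tterm r α β k) atTop
          (𝓝 (∑' k, Tterm r α β k)) := h5.comp (tendsto_add_atTop_nat 1)
      exact tendsto_nhds_unique h6 hlimS
    · -- terminating case
      push_neg at hα
      obtain ⟨j, m, hj⟩ := hα
      have hm : m ≠ 0 := by
        rintro rfl
        exact hP (Finset.prod_eq_zero (Finset.mem_univ j) (by simpa using hj))
      obtain ⟨m', rfl⟩ : ∃ m', m = m' + 1 := ⟨m - 1, by omega⟩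
      have hzero : ∀ k ∉ Finset.range ((m'+1)+1), Tterm r α β k = 0 := by
        intro k hk
        rw [Finset.mem_range, not_lt] at hk
        simp only [Tterm]
        rw [Finset.prod_eq_zero (Finset.mem_univ j) (poch_eq_zero hj (by omega)), zero_div]
      rw [tsum_eq_sum hzero, partial_sum r α β hβ hkey hP (m'+1)]
      rw [Finset.prod_eq_zero (Finset.mem_univ j) (poch_eq_zero hj (by omega)), zero_div]
      rw [Finset.prod_eq_zero (Finset.mem_univ j) (show Complex.Gamma (α j + 1) = 0 by
        rw [show α j + 1 = -((m' : ℕ) : ℂ) by rw [hj]; push_cast; ring]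
        exact Complex.Gamma_neg_nat_eq_zero m'), div_zero]
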